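/- For λ ≥ 2, E[N_{1:λ}²] ≥ E[N_{2:λ}²], where N_{1:λ} and N_{2:λ} are the first and second order statistics of λ i.i.d. standard normal random variables. -/

import Mathlib

open MeasureTheory ProbabilityTheory Filter
open scoped ENNReal NNReal

noncomputable def stdPi (n : ℕ) : Measure (Fin n → ℝ) :=
  Measure.pi fun _ => gaussianReal 0 1

/-- The `i`-th order statistic (0-indexed): the `i`-th smallest coordinate. -/
noncomputable def orderStat (n i : ℕ) (ω : Fin n → ℝ) : ℝ :=
  ((List.ofFn ω).insertionSort (· ≤ ·)).getD i 0

noncomputable def γ : Measure ℝ := gaussianReal 0 1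

/-! ### Sorted list counting lemma -/

lemma sorted_countP {l : List ℝ} (hl : l.Pairwise (· ≤ ·)) (p : ℝ → Bool)
    (hp : ∀ x y : ℝ, x ≤ y → p y = true → p x = true) {k : ℕ} (hk : k < l.length) :
    p (l.get ⟨k, hk⟩) = true ↔ k + 1 ≤ l.countP p := by
  have hmono : ∀ (i j : ℕ) (hi : i < l.length) (hj : j < l.length), i ≤ j →
      l.get ⟨i, hi⟩ ≤ l.get ⟨j, hj⟩ := by
    intro i j hi hj hij
    rcases eq_or_lt_of_le hij with h | h
    · subst h; exact le_refl _
    · exact List.pairwise_iff_get.mp hl ⟨i, hi⟩ ⟨j, hj⟩ h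
  constructor
  · intro h
    have htake : ∀ x ∈ l.take (k+1), p x = true := by
      intro x hx
      obtain ⟨i, hi, hx⟩ := List.getElem_of_mem hx
      have hlen : (l.take (k+1)).length ≤ k + 1 := by simp [List.length_take]
      have hi2 : i < l.length := by
        have := List.length_take_le (k+1) l
        have : i < k + 1 := lt_of_lt_of_le hi hlen
        omega
      have hx' : x = l.get ⟨i, hi2⟩ := by
        rw [← hx]; simp [List.getElem_take]
      have hik : i ≤ k := by omega
      exact hp x _ (hx' ▸ hmono i k hi2 hk hik) h
    have h1 : (l.take (k+1)).countP p = k + 1 := by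
      rw [List.countP_eq_length.mpr htake, List.length_take]
      omega
    calc k + 1 = (l.take (k+1)).countP p := h1.symm
      _ ≤ (l.take (k+1)).countP p + (l.drop (k+1)).countP p := Nat.le_add_right _ _
      _ = l.countP p := by rw [← List.countP_append, List.take_append_drop]
  · intro h
    by_contra hpk
    have hdrop : ∀ x ∈ l.drop k, p x = false := by
      intro x hx
      obtain ⟨i, hi, hx⟩ := List.getElem_of_mem hx
      have hi2 : k + i < l.length := by
        have := @List.length_drop _ k l
        omega
      have hx' : x = l.get ⟨k + i, hi2⟩ := by
        rw [← hx]; simp [List.getElem_drop]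
      by_contra hcon
      have : p x = true := by simpa using hcon
      exact hpk (hp _ x (hx' ▸ hmono k (k+i) hk hi2 (Nat.le_add_right _ _)) this)
    have h2 : (l.drop k).countP p = 0 := by
      rw [List.countP_eq_zero]
      intro x hx
      simp [hdrop x hx]
    have h3 : l.countP p ≤ k := by
      calc l.countP p = (l.take k).countP p + (l.drop k).countP p := by
            rw [← List.countP_append, List.take_append_drop]
        _ = (l.take k).countP p := by rw [h2, Nat.add_zero]
        _ ≤ (l.take k).length := List.countP_le_length
        _ ≤ k := by simp [List.length_take]
    omega

lemma card_filter_eq_countP (n : ℕ) (q : Fin n → Prop) [DecidablePred q] :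
    (Finset.univ.filter q).card = (List.finRange n).countP (fun i => decide (q i)) := by
  rw [Fin.univ_def]
  simp [Finset.filter, Finset.card, Multiset.countP_eq_card_filter]
  rw [List.countP_eq_length_filter]

lemma orderStat_char {n k : ℕ} (hk : k < n) (ω : Fin n → ℝ) (p : ℝ → Prop) [DecidablePred p]
    (hp : ∀ x y : ℝ, x ≤ y → p y → p x) :
    p (orderStat n k ω) ↔ k + 1 ≤ (Finset.univ.filter fun i => p (ω i)).card := by
  set l := (List.ofFn ω).insertionSort (· ≤ ·) with hl
  have hperm : l.Perm (List.ofFn ω) := List.perm_insertionSort _ _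
  have hlen : l.length = n := by rw [hperm.length_eq, List.length_ofFn]
  have hk' : k < l.length := hlen ▸ hk
  have hgd : orderStat n k ω = l.get ⟨k, hk'⟩ := by
    rw [orderStat, ← hl, List.getD_eq_getElem _ _ hk']
    simp
  have hsorted : l.Pairwise (· ≤ ·) := List.pairwise_insertionSort _ _
  have key := sorted_countP hsorted (fun x => decide (p x))
    (fun x y hxy hy => by simpa using hp x y hxy (by simpa using hy)) hk'
  rw [hgd]
  rw [show (p (l.get ⟨k, hk'⟩)) ↔ (decide (p (l.get ⟨k, hk'⟩)) = true) by simp]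
  rw [key, hperm.countP_eq, List.ofFn_eq_map, List.countP_map,
    card_filter_eq_countP]
  rfl

lemma lt_orderStat_iff {n k : ℕ} (hk : k < n) (ω : Fin n → ℝ) (a : ℝ) :
    a < orderStat n k ω ↔ (Finset.univ.filter fun i => ω i ≤ a).card ≤ k := by
  have h := orderStat_char hk ω (fun x => x ≤ a) (fun x y hxy hy => le_trans hxy hy)
  rw [← not_le, h, not_le, Nat.lt_succ_iff]

lemma orderStat_lt_iff {n k : ℕ} (hk : k < n) (ω : Fin n → ℝ) (b : ℝ) :
    orderStat n k ω < b ↔ k + 1 ≤ (Finset.univ.filter fun i => ω i < b).card := by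
  exact orderStat_char hk ω (fun x => x < b) (fun x y hxy hy => lt_of_le_of_lt hxy hy)

/-! ### One-dimensional Gaussian facts -/

lemma gamma_map_neg : γ.map (fun x => -x) = γ := by
  have h := gaussianReal_map_const_mul (μ := 0) (v := 1) (-1)
  have h2 : (fun x : ℝ => (-1) * x) = (fun x : ℝ => -x) := by funext x; ring
  have h3 : ((⟨(-1:ℝ)^2, sq_nonneg _⟩ : NNReal) * 1) = 1 := by
    ext; norm_num
  rw [h2] at h
  rw [γ, h]
  congr 1
  · simp

lemma gamma_Iio_neg (a : ℝ) : γ (Set.Iio (-a)) = γ (Set.Ioi a) := by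
  conv_lhs => rw [← gamma_map_neg]
  rw [Measure.map_apply measurable_neg measurableSet_Iio]
  congr 1
  ext x
  simp

lemma gamma_Ici_neg (a : ℝ) : γ (Set.Ici (-a)) = γ (Set.Iic a) := by
  conv_lhs => rw [← gamma_map_neg]
  rw [Measure.map_apply measurable_neg measurableSet_Ici]
  congr 1
  ext x
  simp

lemma gamma_singleton (a : ℝ) : γ {a} = 0 :=
  gaussianReal_absolutelyContinuous 0 one_ne_zero (Real.volume_singleton)

lemma gamma_Iic_eq_Iio (a : ℝ) : γ (Set.Iic a) = γ (Set.Iio a) := by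
  have : Set.Iic a = Set.Iio a ∪ {a} := by
    ext x; simp [le_iff_lt_or_eq]
  rw [this]
  refine le_antisymm ?_ (measure_mono Set.subset_union_left)
  calc γ (Set.Iio a ∪ {a}) ≤ γ (Set.Iio a) + γ {a} := measure_union_le _ _
    _ = γ (Set.Iio a) := by rw [gamma_singleton, add_zero]

lemma gamma_Q_le_P {a : ℝ} (ha : 0 ≤ a) : γ (Set.Ioi a) ≤ γ (Set.Iic a) := by
  calc γ (Set.Ioi a) ≤ γ (Set.Ioi 0) := measure_mono (Set.Ioi_subset_Ioi ha)
    _ = γ (Set.Iio 0) := by rw [← gamma_Iio_neg 0, neg_zero]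
    _ ≤ γ (Set.Iic a) := measure_mono (fun x hx => le_trans (le_of_lt hx) ha)

/-! ### Product measure computations -/

lemma pi_ite_measure (n : ℕ) (j : Fin n) (u v : Set ℝ) :
    stdPi n (Set.univ.pi fun i => if i = j then u else v) = γ u * γ v ^ (n - 1) := by
  rw [stdPi, Measure.pi_pi]
  rw [← Finset.mul_prod_erase Finset.univ _ (Finset.mem_univ j)]
  simp only [if_pos rfl]
  congr 1
  have hcg : ∀ i ∈ Finset.univ.erase j, (gaussianReal 0 1) (if i = j then u else v) = γ v :=
    fun i hi => by rw [if_neg (Finset.ne_of_mem_erase hi)]; rfl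
  rw [Finset.prod_congr rfl hcg, Finset.prod_const,
    Finset.card_erase_of_mem (Finset.mem_univ j),
    Finset.card_univ, Fintype.card_fin]

lemma measurable_cardP (n : ℕ) (p : ℝ → Prop) [DecidablePred p]
    (hp : ∀ i : Fin n, MeasurableSet {ω : Fin n → ℝ | p (ω i)}) :
    Measurable (fun ω : Fin n → ℝ => (Finset.univ.filter fun i => p (ω i)).card) := by
  simp_rw [Finset.card_filter]
  exact Finset.measurable_sum _ (fun i _ =>
    Measurable.ite (hp i) measurable_const measurable_const)

lemma measurable_cardle (n : ℕ) (a : ℝ) :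
    Measurable (fun ω : Fin n → ℝ => (Finset.univ.filter fun i => ω i ≤ a).card) :=
  measurable_cardP n (· ≤ a) (fun i => measurableSet_le (measurable_pi_apply i) measurable_const)

lemma measurable_cardlt (n : ℕ) (c : ℝ) :
    Measurable (fun ω : Fin n → ℝ => (Finset.univ.filter fun i => ω i < c).card) :=
  measurable_cardP n (· < c) (fun i => measurableSet_lt (measurable_pi_apply i) measurable_const)

lemma card_one_subset (n : ℕ) (a : ℝ) :
    {ω : Fin n → ℝ | (Finset.univ.filter fun i => ω i ≤ a).card = 1}
      ⊆ ⋃ j, Set.univ.pi fun i => if i = j then Set.Iic a else Set.Ioi a := by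
  intro ω hω
  obtain ⟨j, hj⟩ := Finset.card_eq_one.mp hω
  refine Set.mem_iUnion.mpr ⟨j, ?_⟩
  rw [Set.mem_univ_pi]
  intro i
  by_cases hij : i = j
  · subst hij
    simp only [if_pos rfl]
    have : i ∈ Finset.univ.filter fun k => ω k ≤ a := hj ▸ Finset.mem_singleton_self i
    simpa using Finset.mem_filter.mp this |>.2
  · simp only [if_neg hij, Set.mem_Ioi]
    by_contra hcon
    have : i ∈ Finset.univ.filter fun k => ω k ≤ a :=
      Finset.mem_filter.mpr ⟨Finset.mem_univ i, not_lt.mp hcon⟩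
    rw [hj, Finset.mem_singleton] at this
    exact hij this

lemma subset_card_one (n : ℕ) (c : ℝ) :
    (⋃ j, Set.univ.pi fun i => if i = j then Set.Iio c else Set.Ici c)
      ⊆ {ω : Fin n → ℝ | (Finset.univ.filter fun i => ω i < c).card = 1} := by
  intro ω hω
  obtain ⟨j, hj⟩ := Set.mem_iUnion.mp hω
  rw [Set.mem_univ_pi] at hj
  have hfil : (Finset.univ.filter fun i => ω i < c) = {j} := by
    ext i
    simp only [Finset.mem_filter, Finset.mem_univ, true_and, Finset.mem_singleton]
    constructor
    · intro hi
      by_contra hij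
      have := hj i
      rw [if_neg hij] at this
      exact absurd hi (not_lt.mpr this)
    · intro hij
      subst hij
      have := hj i
      rwa [if_pos rfl] at this
  simp [Set.mem_setOf_eq, hfil]

lemma Tdisj (n : ℕ) (c : ℝ) : Pairwise (Function.onFun Disjoint
    (fun j : Fin n => Set.univ.pi fun i => if i = j then Set.Iio c else Set.Ici c)) := by
  intro j k hjk
  rw [Function.onFun, Set.disjoint_left]
  intro ω hj hk
  rw [Set.mem_univ_pi] at hj hk
  have h1 := hj j
  have h2 := hk j
  rw [if_pos rfl] at h1
  rw [if_neg hjk] at h2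
  exact absurd h1 (by simpa using h2)

lemma measure_card_le_one (n : ℕ) (a : ℝ) :
    stdPi n {ω : Fin n → ℝ | (Finset.univ.filter fun i => ω i ≤ a).card = 1}
      ≤ n * (γ (Set.Iic a) * γ (Set.Ioi a) ^ (n - 1)) := by
  calc stdPi n {ω : Fin n → ℝ | (Finset.univ.filter fun i => ω i ≤ a).card = 1}
      ≤ stdPi n (⋃ j, Set.univ.pi fun i => if i = j then Set.Iic a else Set.Ioi a) :=
        measure_mono (card_one_subset n a)
    _ ≤ ∑' j : Fin n, stdPi n (Set.univ.pi fun i => if i = j then Set.Iic a else Set.Ioi a) :=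
        measure_iUnion_le _
    _ = ∑ j : Fin n, stdPi n (Set.univ.pi fun i => if i = j then Set.Iic a else Set.Ioi a) :=
        tsum_fintype _
    _ = n * (γ (Set.Iic a) * γ (Set.Ioi a) ^ (n - 1)) := by
        simp_rw [pi_ite_measure]
        rw [Finset.sum_const, Finset.card_univ, Fintype.card_fin, nsmul_eq_mul]

lemma le_measure_card_lt_one (n : ℕ) (c : ℝ) :
    n * (γ (Set.Iio c) * γ (Set.Ici c) ^ (n - 1))
      ≤ stdPi n {ω : Fin n → ℝ | (Finset.univ.filter fun i => ω i < c).card = 1} := by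
  have hmeas : ∀ j : Fin n,
      MeasurableSet (Set.univ.pi fun i => if i = j then Set.Iio c else Set.Ici c) := by
    intro j
    refine MeasurableSet.univ_pi (fun i => ?_)
    by_cases hij : i = j
    · rw [if_pos hij]; exact measurableSet_Iio
    · rw [if_neg hij]; exact measurableSet_Ici
  calc n * (γ (Set.Iio c) * γ (Set.Ici c) ^ (n - 1))
      = ∑ j : Fin n, stdPi n (Set.univ.pi fun i => if i = j then Set.Iio c else Set.Ici c) := by
        simp_rw [pi_ite_measure]
        rw [Finset.sum_const, Finset.card_univ, Fintype.card_fin, nsmul_eq_mul]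
    _ = ∑' j : Fin n, stdPi n (Set.univ.pi fun i => if i = j then Set.Iio c else Set.Ici c) :=
        (tsum_fintype _).symm
    _ = stdPi n (⋃ j, Set.univ.pi fun i => if i = j then Set.Iio c else Set.Ici c) :=
        (measure_iUnion (Tdisj n c) hmeas).symm
    _ ≤ stdPi n {ω : Fin n → ℝ | (Finset.univ.filter fun i => ω i < c).card = 1} :=
        measure_mono (subset_card_one n c)

lemma PQ_ineq {P Q : ℝ≥0∞} (h : Q ≤ P) {n : ℕ} (hn : 2 ≤ n) :
    P * Q ^ (n - 1) ≤ Q * P ^ (n - 1) := by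
  obtain ⟨m, rfl⟩ : ∃ m, n = m + 2 := ⟨n - 2, by omega⟩
  have hmm : m + 2 - 1 = m + 1 := rfl
  rw [hmm, pow_succ, pow_succ]
  calc P * (Q ^ m * Q) = (P * Q) * Q ^ m := by ring
    _ ≤ (P * Q) * P ^ m := mul_le_mul_right (pow_le_pow_left' h m) _
    _ = Q * (P ^ m * P) := by ring

/-! ### Tail comparison -/

lemma tail_compare {n : ℕ} (hn : 2 ≤ n) {a : ℝ} (ha : 0 < a) :
    stdPi n {ω | (Finset.univ.filter fun i => ω i ≤ a).card = 1}
      ≤ stdPi n {ω : Fin n → ℝ | (Finset.univ.filter fun i => ω i < -a).card = 1} := by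
  calc stdPi n {ω | (Finset.univ.filter fun i => ω i ≤ a).card = 1}
      ≤ n * (γ (Set.Iic a) * γ (Set.Ioi a) ^ (n - 1)) := measure_card_le_one n a
    _ ≤ n * (γ (Set.Ioi a) * γ (Set.Iic a) ^ (n - 1)) :=
        mul_le_mul_right (PQ_ineq (gamma_Q_le_P ha.le) hn) _
    _ = n * (γ (Set.Iio (-a)) * γ (Set.Ici (-a)) ^ (n - 1)) := by
        rw [gamma_Iio_neg, gamma_Ici_neg]
    _ ≤ stdPi n {ω : Fin n → ℝ | (Finset.univ.filter fun i => ω i < -a).card = 1} :=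
        le_measure_card_lt_one n (-a)

/-! ### Measurability and integrability -/

lemma measurable_orderStat {n k : ℕ} (hk : k < n) : Measurable (orderStat n k) := by
  apply measurable_of_Ioi
  intro a
  have : orderStat n k ⁻¹' Set.Ioi a = {ω : Fin n → ℝ |
      (Finset.univ.filter fun i => ω i ≤ a).card ≤ k} := by
    ext ω
    simp only [Set.mem_preimage, Set.mem_Ioi, Set.mem_setOf_eq]
    exact lt_orderStat_iff hk ω a
  rw [this]
  exact measurable_cardle n a (MeasurableSet.of_discrete : MeasurableSet {m : ℕ | m ≤ k})

lemma orderStat_sq_le {n k : ℕ} (hk : k < n) (ω : Fin n → ℝ) :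
    orderStat n k ω ^ 2 ≤ ∑ i, (ω i) ^ 2 := by
  set l := (List.ofFn ω).insertionSort (· ≤ ·) with hl
  have hperm : l.Perm (List.ofFn ω) := List.perm_insertionSort _ _
  have hlen : l.length = n := by rw [hperm.length_eq, List.length_ofFn]
  have hk' : k < l.length := hlen ▸ hk
  have hgd : orderStat n k ω = l.get ⟨k, hk'⟩ := by
    rw [orderStat, ← hl, List.getD_eq_getElem _ _ hk']
    simp
  have hmem : l.get ⟨k, hk'⟩ ∈ List.ofFn ω := hperm.mem_iff.mp (l.get_mem _)
  obtain ⟨i, hi⟩ := List.mem_ofFn.mp hmem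
  rw [hgd, ← hi]
  exact Finset.single_le_sum (f := fun i => (ω i) ^ 2) (fun j _ => sq_nonneg _)
    (Finset.mem_univ i)

lemma stdPi_map_eval {n : ℕ} (i : Fin n) : (stdPi n).map (fun ω => ω i) = γ := by
  refine Measure.ext (fun s hs => ?_)
  rw [Measure.map_apply (measurable_pi_apply i) hs]
  have hpre : (fun ω : Fin n → ℝ => ω i) ⁻¹' s
      = Set.univ.pi (fun j => if j = i then s else Set.univ) := by
    ext ω
    simp only [Set.mem_preimage, Set.mem_univ_pi]
    constructor
    · intro h j
      by_cases hj : j = i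
      · subst hj; simpa using h
      · simp [hj]
    · intro h
      have := h i
      simpa using this
  rw [hpre]
  have := pi_ite_measure n i s Set.univ
  rw [this]
  simp [γ]

lemma gamma_sq_lt_top : ∫⁻ x, ENNReal.ofReal (x ^ 2) ∂γ < ⊤ := by
  have hγ : γ = volume.withDensity (gaussianPDF 0 1) := by
    rw [γ, gaussianReal_of_var_ne_zero _ one_ne_zero]
  have hfm : Measurable (fun x : ℝ => ENNReal.ofReal (x ^ 2)) :=
    ENNReal.measurable_ofReal.comp (measurable_id.pow_const 2)
  rw [hγ, lintegral_withDensity_eq_lintegral_mul _ (measurable_gaussianPDF 0 1) hfm]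
  have hint : Integrable (fun x : ℝ => gaussianPDFReal 0 1 x * x ^ 2) := by
    have h2 : Integrable (fun x : ℝ => x ^ (2:ℝ) * Real.exp (-(1/2) * x ^ 2)) :=
      integrable_rpow_mul_exp_neg_mul_sq (by norm_num) (by norm_num)
    have h2' : Integrable (fun x : ℝ => x ^ (2:ℕ) * Real.exp (-(1/2) * x ^ 2)) := by
      refine h2.congr (Filter.Eventually.of_forall (fun x => ?_))
      show x ^ (2:ℝ) * Real.exp (-(1/2) * x ^ 2) = x ^ (2:ℕ) * Real.exp (-(1/2) * x ^ 2)
      rw [← Real.rpow_natCast x 2]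
      norm_num
    have heq : (fun x : ℝ => gaussianPDFReal 0 1 x * x ^ 2)
        = fun x : ℝ => (Real.sqrt (2 * Real.pi))⁻¹ * (x ^ (2:ℕ) * Real.exp (-(1/2) * x ^ 2)) := by
      funext x
      rw [gaussianPDFReal]
      push_cast
      rw [show -(x - 0) ^ 2 / (2 * 1) = -(1/2) * x ^ 2 by ring, mul_one]
      ring
    rw [heq]
    exact h2'.const_mul _
  have hb : ∫⁻ x, ENNReal.ofReal (gaussianPDFReal 0 1 x * x ^ 2) ∂volume < ⊤ :=
    hint.lintegral_lt_top
  refine lt_of_le_of_lt (le_of_eq ?_) hb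
  refine lintegral_congr (fun x => ?_)
  simp only [Pi.mul_apply, gaussianPDF]
  rw [ENNReal.ofReal_mul (gaussianPDFReal_nonneg 0 1 x)]

lemma orderStat_lintegral_lt_top {n : ℕ} (hn : 0 < n) :
    ∫⁻ ω, ENNReal.ofReal (orderStat n 0 ω ^ 2) ∂stdPi n < ⊤ := by
  have hle : ∀ ω : Fin n → ℝ, ENNReal.ofReal (orderStat n 0 ω ^ 2)
      ≤ ∑ i : Fin n, ENNReal.ofReal ((ω i) ^ 2) := by
    intro ω
    refine le_trans (ENNReal.ofReal_le_ofReal (orderStat_sq_le hn ω)) ?_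
    rw [ENNReal.ofReal_sum_of_nonneg (fun i _ => sq_nonneg _)]
  calc ∫⁻ ω, ENNReal.ofReal (orderStat n 0 ω ^ 2) ∂stdPi n
      ≤ ∫⁻ ω, ∑ i : Fin n, ENNReal.ofReal ((ω i) ^ 2) ∂stdPi n := lintegral_mono hle
    _ = ∑ i : Fin n, ∫⁻ ω, ENNReal.ofReal ((ω i) ^ 2) ∂stdPi n := by
        refine lintegral_finset_sum _ (fun i _ => ?_)
        exact ENNReal.measurable_ofReal.comp ((measurable_pi_apply i).pow_const 2)
    _ = ∑ _i : Fin n, ∫⁻ x, ENNReal.ofReal (x ^ 2) ∂γ := by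
        refine Finset.sum_congr rfl (fun i _ => ?_)
        have hfm2 : Measurable (fun x : ℝ => ENNReal.ofReal (x ^ 2)) :=
          (measurable_id.pow_const 2).ennreal_ofReal
        rw [← stdPi_map_eval i]
        exact (lintegral_map hfm2 (measurable_pi_apply i)).symm
    _ < ⊤ := ENNReal.sum_lt_top.mpr (fun i _ => gamma_sq_lt_top)

lemma sq_tail_iff {t x : ℝ} (ht : 0 < t) :
    t < x ^ 2 ↔ Real.sqrt t < x ∨ x < -Real.sqrt t := by
  have h1 : (Real.sqrt t) ^ 2 = t := Real.sq_sqrt ht.le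
  have h2 : 0 < Real.sqrt t := Real.sqrt_pos.mpr ht
  constructor
  · intro h
    by_contra hc
    push_neg at hc
    nlinarith [hc.1, hc.2]
  · intro h
    rcases h with h | h
    · nlinarith
    · nlinarith

/-! ### The per-level tail inequality -/

lemma meas_sq_tail_le {n : ℕ} (hn : 2 ≤ n) {t : ℝ} (ht : 0 < t) :
    stdPi n {ω | t < orderStat n 1 ω ^ 2} ≤ stdPi n {ω | t < orderStat n 0 ω ^ 2} := by
  have h0n : 0 < n := by omega
  have h1n : 1 < n := by omega
  set a := Real.sqrt t with ha
  have hapos : 0 < a := Real.sqrt_pos.mpr ht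
  have hcard : ∀ ω : Fin n → ℝ, (Finset.univ.filter fun i => ω i < -a).card
      ≤ (Finset.univ.filter fun i => ω i ≤ a).card := by
    intro ω
    apply Finset.card_le_card
    intro i hi
    rw [Finset.mem_filter] at hi ⊢
    refine ⟨hi.1, ?_⟩
    have := hi.2
    linarith
  have m2 : MeasurableSet {ω : Fin n → ℝ | (Finset.univ.filter fun i => ω i ≤ a).card = 1} :=
    measurable_cardle n a (MeasurableSet.of_discrete : MeasurableSet {m : ℕ | m = 1})
  have m3 : MeasurableSet {ω : Fin n → ℝ | (Finset.univ.filter fun i => ω i < -a).card = 1} :=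
    measurable_cardlt n (-a) (MeasurableSet.of_discrete : MeasurableSet {m : ℕ | m = 1})
  have m4 : MeasurableSet {ω : Fin n → ℝ | 2 ≤ (Finset.univ.filter fun i => ω i < -a).card} :=
    measurable_cardlt n (-a) (MeasurableSet.of_discrete : MeasurableSet {m : ℕ | 2 ≤ m})
  have hset1 : {ω : Fin n → ℝ | t < orderStat n 1 ω ^ 2}
      = ({ω | (Finset.univ.filter fun i => ω i ≤ a).card ≤ 0}
          ∪ {ω | (Finset.univ.filter fun i => ω i ≤ a).card = 1})
        ∪ {ω | 2 ≤ (Finset.univ.filter fun i => ω i < -a).card} := by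
    ext ω
    simp only [Set.mem_setOf_eq, Set.mem_union]
    rw [sq_tail_iff ht, ← ha, lt_orderStat_iff h1n ω a, orderStat_lt_iff h1n ω (-a)]
    omega
  have hset0 : {ω : Fin n → ℝ | t < orderStat n 0 ω ^ 2}
      = ({ω | (Finset.univ.filter fun i => ω i ≤ a).card ≤ 0}
          ∪ {ω | (Finset.univ.filter fun i => ω i < -a).card = 1})
        ∪ {ω | 2 ≤ (Finset.univ.filter fun i => ω i < -a).card} := by
    ext ω
    simp only [Set.mem_setOf_eq, Set.mem_union]
    rw [sq_tail_iff ht, ← ha, lt_orderStat_iff h0n ω a, orderStat_lt_iff h0n ω (-a)]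
    omega
  have d12 : Disjoint {ω : Fin n → ℝ | (Finset.univ.filter fun i => ω i ≤ a).card ≤ 0}
      {ω : Fin n → ℝ | (Finset.univ.filter fun i => ω i ≤ a).card = 1} := by
    rw [Set.disjoint_left]
    intro ω h1 h2
    simp only [Set.mem_setOf_eq] at h1 h2
    omega
  have d13 : Disjoint {ω : Fin n → ℝ | (Finset.univ.filter fun i => ω i ≤ a).card ≤ 0}
      {ω : Fin n → ℝ | (Finset.univ.filter fun i => ω i < -a).card = 1} := by
    rw [Set.disjoint_left]
    intro ω h1 h2
    simp only [Set.mem_setOf_eq] at h1 h2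
    have := hcard ω
    omega
  have dU2 : Disjoint ({ω : Fin n → ℝ | (Finset.univ.filter fun i => ω i ≤ a).card ≤ 0}
        ∪ {ω | (Finset.univ.filter fun i => ω i ≤ a).card = 1})
      {ω : Fin n → ℝ | 2 ≤ (Finset.univ.filter fun i => ω i < -a).card} := by
    rw [Set.disjoint_left]
    rintro ω (h1 | h1) h2 <;> simp only [Set.mem_setOf_eq] at h1 h2 <;>
      · have := hcard ω
        omega
  have dU0 : Disjoint ({ω : Fin n → ℝ | (Finset.univ.filter fun i => ω i ≤ a).card ≤ 0}
        ∪ {ω | (Finset.univ.filter fun i => ω i < -a).card = 1})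
      {ω : Fin n → ℝ | 2 ≤ (Finset.univ.filter fun i => ω i < -a).card} := by
    rw [Set.disjoint_left]
    rintro ω (h1 | h1) h2 <;> simp only [Set.mem_setOf_eq] at h1 h2 <;>
      · have := hcard ω
        omega
  rw [hset1, hset0, measure_union dU2 m4, measure_union dU0 m4, measure_union d12 m2,
    measure_union d13 m3]
  have hmain : stdPi n {ω : Fin n → ℝ | (Finset.univ.filter fun i => ω i ≤ a).card = 1}
      ≤ stdPi n {ω : Fin n → ℝ | (Finset.univ.filter fun i => ω i < -a).card = 1} := by
    have hzero : ∀ ω : Fin n → ℝ, ((Finset.univ.filter fun i => ω i ≤ a).card ≤ 0)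
        = ((Finset.univ.filter fun i => ω i ≤ a).card ≤ 0) := fun _ => rfl
    exact tail_compare hn hapos
  gcongr

theorem stmt_3 (lam : ℕ) (hlam : 2 ≤ lam) :
    (∫ ω, (orderStat lam 1 ω) ^ 2 ∂(stdPi lam))
      ≤ ∫ ω, (orderStat lam 0 ω) ^ 2 ∂(stdPi lam) := by
  have h0n : 0 < lam := by omega
  have h1n : 1 < lam := by omega
  have h0m : Measurable (fun ω => orderStat lam 0 ω ^ 2) :=
    (measurable_orderStat h0n).pow_const 2
  have h1m : Measurable (fun ω => orderStat lam 1 ω ^ 2) :=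
    (measurable_orderStat h1n).pow_const 2
  rw [integral_eq_lintegral_of_nonneg_ae (ae_of_all _ (fun ω => sq_nonneg _))
    h1m.aestronglyMeasurable,
    integral_eq_lintegral_of_nonneg_ae (ae_of_all _ (fun ω => sq_nonneg _))
    h0m.aestronglyMeasurable]
  refine ENNReal.toReal_mono (orderStat_lintegral_lt_top h0n).ne ?_
  rw [lintegral_eq_lintegral_meas_lt _ (ae_of_all _ (fun ω => sq_nonneg _))
    h1m.aemeasurable,
    lintegral_eq_lintegral_meas_lt _ (ae_of_all _ (fun ω => sq_nonneg _))
    h0m.aemeasurable]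
  refine lintegral_mono_ae ?_
  filter_upwards [ae_restrict_mem measurableSet_Ioi] with t ht
  exact meas_sq_tail_le hlam ht
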